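/- Let n ≥ 1, and regard ℂ as the subring of the real quaternions ℍ spanned by 1 and i. Let v = (1, i, 0, …, 0) and w = (1, j, 0, …, 0) be vectors in ℍ^{n+1}, where i and j are the standard quaternion units. Then for every matrix A in the complex special unitary group SU(n+1), every z ∈ ℂ with |z| = 1, and every quaternion p of norm 1, the vector obtained from A·v by multiplying each entry on the left by z (all products computed in ℍ via the embedding ℂ ↪ ℍ) is not equal to the vector (1·p, j·p, 0, …, 0) obtained from w by multiplying each entry on the right by p. Equivalently, the action of SU(n+1) × S¹ on quaternionic projective space ℍP^n given by (A, e^{iθ})·[v] = [e^{iθ/2} A v] cannot move the point [1 : i : 0 : … : 0] to the point [1 : j : 0 : … : 0], and hence this action is not transitive. -/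

import Mathlib

open Quaternion

/-- The embedding of `ℂ` into the real quaternions sending `a + b·i` to `a + b·i`. -/
noncomputable def complexToQuat (z : ℂ) : ℍ[ℝ] := ⟨z.re, z.im, 0, 0⟩

/-- The quaternion unit `i`. -/
noncomputable def quatI : ℍ[ℝ] := ⟨0, 1, 0, 0⟩

/-- The quaternion unit `j`. -/
noncomputable def quatJ : ℍ[ℝ] := ⟨0, 0, 1, 0⟩

/-- Let `v = (1, i, 0, …, 0)` and `w = (1, j, 0, …, 0)` in `ℍ^{n+1}`, where `n ≥ 1`. For
every `A ∈ SU(n+1)`, every unit complex number `z`, and every unit quaternion `p`, the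
vector obtained from `A·v` by left multiplication of each entry by `z` is not the vector
obtained from `w` by right multiplication of each entry by `p`. Hence the action of
`SU(n+1) × S¹` on `ℍP^n` given by `(A, e^{iθ})·[v] = [e^{iθ/2} A v]` cannot move
`[1 : i : 0 : … : 0]` to `[1 : j : 0 : … : 0]`, so it is not transitive. -/
theorem su_circle_action_not_transitive (n : ℕ) (hn : 1 ≤ n)
    (v w : Fin (n + 1) → ℍ[ℝ])
    (hv : v = fun idx => if idx = 0 then 1 else if idx = 1 then quatI else 0)
    (hw : w = fun idx => if idx = 0 then 1 else if idx = 1 then quatJ else 0)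
    (A : Matrix.specialUnitaryGroup (Fin (n + 1)) ℂ)
    (z : ℂ) (hz : ‖z‖ = 1) (p : ℍ[ℝ]) (hp : ‖p‖ = 1) :
    (fun idx => complexToQuat z *
        ∑ m, complexToQuat ((A : Matrix (Fin (n + 1)) (Fin (n + 1)) ℂ) idx m) * v m)
      ≠ fun idx => w idx * p := by
  intro h
  have h01 : (0 : Fin (n+1)) ≠ 1 := by
    intro he
    have := congrArg Fin.val he
    simp [Fin.val_one, Nat.mod_eq_of_lt (by omega : 1 < n + 1)] at this
  have hsum : ∀ idx, ∑ m, complexToQuat ((A : Matrix (Fin (n + 1)) (Fin (n + 1)) ℂ) idx m) * v m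
      = complexToQuat ((A : Matrix (Fin (n + 1)) (Fin (n + 1)) ℂ) idx 0) * v 0
        + complexToQuat ((A : Matrix (Fin (n + 1)) (Fin (n + 1)) ℂ) idx 1) * v 1 := by
    intro idx
    refine Fintype.sum_eq_add 0 1 h01 ?_
    intro c hc
    rw [hv]
    simp [hc.1, hc.2]
  have h0 := congrFun h 0
  have h1 := congrFun h 1
  rw [hsum] at h0 h1
  rw [hv, hw] at h0 h1
  simp only [if_pos rfl, if_neg (Ne.symm h01)] at h0 h1
  rw [Quaternion.ext_iff] at h0 h1
  simp only [Quaternion.re_mul, Quaternion.imI_mul, Quaternion.imJ_mul, Quaternion.imK_mul,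
    Quaternion.re_add, Quaternion.imI_add, Quaternion.imJ_add, Quaternion.imK_add] at h0 h1
  simp [complexToQuat, quatI, quatJ] at h0 h1
  obtain ⟨-, -, e3, e4⟩ := h0
  obtain ⟨-, -, f3, f4⟩ := h1
  have hp0 : p = 0 := by
    ext
    · exact f3.symm
    · exact f4
    · exact e3.symm
    · exact e4.symm
  rw [hp0] at hp
  simp at hp
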